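/- Let f be an odd prime, Q a primitive form of discriminant Df², and q a primitive form of discriminant D together with an integer matrix R of determinant f satisfying q·R = Q. Then Q is properly equivalent to q·R_g for some g with 0 ≤ g ≤ f and f ∤ q(g,1) (where the condition is vacuous for g = f). -/

import Mathlib

/-- An integral binary quadratic form ax² + bxy + cy². -/
structure BQF where
  a : ℤ
  b : ℤ
  c : ℤ

namespace BQF

/-- Value of the form at (x, y). -/
def eval (q : BQF) (x y : ℤ) : ℤ := q.a * x ^ 2 + q.b * x * y + q.c * y ^ 2

/-- Discriminant b² - 4ac. -/
def disc (q : BQF) : ℤ := q.b ^ 2 - 4 * q.a * q.c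

/-- A form is primitive if gcd(a, b, c) = 1. -/
def IsPrimitive (q : BQF) : Prop := Int.gcd (Int.gcd q.a q.b) q.c = 1

/-- Right action: (q·M)(x,y) = q(px + ry, sx + ty) for M = [[p,r],[s,t]]. -/
def act (q : BQF) (M : Matrix (Fin 2) (Fin 2) ℤ) : BQF :=
  ⟨q.eval (M 0 0) (M 1 0),
   q.eval (M 0 0 + M 0 1) (M 1 0 + M 1 1) - q.eval (M 0 0) (M 1 0) - q.eval (M 0 1) (M 1 1),
   q.eval (M 0 1) (M 1 1)⟩

/-- Proper equivalence: equivalence under the SL₂(ℤ) action. -/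
def ProperEquiv (q q' : BQF) : Prop :=
  ∃ U : Matrix.SpecialLinearGroup (Fin 2) ℤ, q.act U.1 = q'

end BQF

/-- R_g = [[f,g],[0,1]] for g < f, and R_f = [[1,0],[0,f]] when g = f. -/
def Rmat (f g : ℤ) : Matrix (Fin 2) (Fin 2) ℤ :=
  if g = f then !![1, 0; 0, f] else !![f, g; 0, 1]

lemma decomp (f : ℕ) (hf : f.Prime) (R : Matrix (Fin 2) (Fin 2) ℤ) (hR : R.det = (f : ℤ)) :
    ∃ g : ℤ, 0 ≤ g ∧ g ≤ (f : ℤ) ∧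
      ∃ W : Matrix (Fin 2) (Fin 2) ℤ, W.det = 1 ∧ R = Rmat f g * W := by
  have hf0 : (f : ℤ) ≠ 0 := Int.natCast_ne_zero.mpr hf.ne_zero
  have hfpos : (0:ℤ) < f := by exact_mod_cast hf.pos
  set p := R 0 0 with hp; set r := R 0 1 with hr
  set s := R 1 0 with hs; set t := R 1 1 with ht
  have hRe : R = !![p, r; s, t] := by rw [hp, hr, hs, ht, ← Matrix.eta_fin_two R]
  have hdet : p * t - r * s = (f:ℤ) := by rw [← hR, Matrix.det_fin_two]
  set d : ℤ := (Int.gcd s t : ℤ) with hdd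
  have hd0 : d ≠ 0 := by
    intro h
    rw [hdd, Int.natCast_eq_zero, Int.gcd_eq_zero_iff] at h
    rw [h.1, h.2] at hdet
    simp at hdet
    exact hf0 hdet.symm
  have hds : d ∣ s := Int.gcd_dvd_left s t
  have hdt : d ∣ t := Int.gcd_dvd_right s t
  set u := Int.gcdA s t with hu; set v := Int.gcdB s t with hv
  have hbez : d = s * u + t * v := Int.gcd_eq_gcd_ab s t
  set V : Matrix (Fin 2) (Fin 2) ℤ := !![t/d, u; -(s/d), v] with hV
  have htd : d * (t / d) = t := Int.mul_ediv_cancel' hdt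
  have hsd : d * (s / d) = s := Int.mul_ediv_cancel' hds
  have hVdet : V.det = 1 := by
    rw [hV, Matrix.det_fin_two_of]
    refine mul_left_cancel₀ hd0 ?_
    calc d * (t / d * v - u * -(s / d)) = (d * (t/d)) * v + (d * (s/d)) * u := by ring
      _ = t * v + s * u := by rw [htd, hsd]
      _ = d * 1 := by rw [mul_one, hbez]; ring
  set a' := p * (t/d) + r * (-(s/d)) with ha'
  set b' := p * u + r * v with hb'
  have hmul : R * V = !![a', b'; 0, d] := by
    rw [hRe, hV, Matrix.mul_fin_two]
    have e1 : s * (t/d) + t * (-(s/d)) = 0 := by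
      refine mul_left_cancel₀ hd0 ?_
      calc d * (s * (t/d) + t * (-(s/d))) = s * (d * (t/d)) - (d * (s/d)) * t := by ring
        _ = s * t - s * t := by rw [htd, hsd]
        _ = d * 0 := by ring
    have e2 : s * u + t * v = d := hbez.symm
    rw [e1, e2]
  have had : a' * d = (f:ℤ) := by
    have h1 : (R * V).det = (f:ℤ) * 1 := by rw [Matrix.det_mul, hR, hVdet]
    rw [hmul, Matrix.det_fin_two_of] at h1
    linarith [h1]
  have hdvd : Int.gcd s t ∣ f := by
    rw [← Int.natCast_dvd_natCast, ← hdd]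
    exact ⟨a', by linarith [had, mul_comm a' d]⟩
  rcases (Nat.Prime.eq_one_or_self_of_dvd hf _ hdvd) with h1 | h1
  · -- d = 1, bottom row (0,1), top (f, b')
    have hd1 : d = 1 := by rw [hdd, h1]; norm_num
    have haf : a' = (f:ℤ) := by rw [hd1, mul_one] at had; exact had
    set g : ℤ := b' % (f:ℤ) with hg
    have hg0 : 0 ≤ g := Int.emod_nonneg b' hf0
    have hglt : g < (f:ℤ) := Int.emod_lt_of_pos b' hfpos
    set k : ℤ := -(b' / (f:ℤ)) with hk
    have hgk : (f:ℤ) * k + b' = g := by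
      rw [hg, hk, Int.emod_def]; ring
    set V' : Matrix (Fin 2) (Fin 2) ℤ := V * !![1, k; 0, 1] with hV'
    have hV'det : V'.det = 1 := by
      rw [hV', Matrix.det_mul, hVdet, Matrix.det_fin_two_of]; norm_num
    have hRV' : R * V' = Rmat f g := by
      rw [hV', ← Matrix.mul_assoc, hmul, Matrix.mul_fin_two, Rmat, if_neg hglt.ne]
      rw [hd1, haf]
      have e : (f:ℤ) * k + b' * 1 = g := by rw [mul_one]; exact hgk
      ext i j
      fin_cases i <;> fin_cases j <;> simp <;> linarith [e]
    refine ⟨g, hg0, le_of_lt hglt, V'.adjugate, ?_, ?_⟩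
    · rw [Matrix.det_adjugate, hV'det, one_pow]
    · rw [← hRV', Matrix.mul_assoc, Matrix.mul_adjugate, hV'det, one_smul, mul_one]
  · -- d = f, top-left = 1
    have hdf : d = (f:ℤ) := by rw [hdd, h1]
    have ha1 : a' = 1 := by
      have h2 := had
      rw [hdf] at h2
      exact mul_right_cancel₀ hf0 (by rw [one_mul]; exact h2)
    set V' : Matrix (Fin 2) (Fin 2) ℤ := V * !![1, -b'; 0, 1] with hV'
    have hV'det : V'.det = 1 := by
      rw [hV', Matrix.det_mul, hVdet, Matrix.det_fin_two_of]; norm_num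
    have hRV' : R * V' = Rmat f ((f:ℕ):ℤ) := by
      rw [hV', ← Matrix.mul_assoc, hmul, Matrix.mul_fin_two, Rmat, if_pos rfl]
      rw [hdf, ha1]
      ext i j
      fin_cases i <;> fin_cases j <;> simp
    refine ⟨(f:ℤ), le_of_lt hfpos, le_refl _, V'.adjugate, ?_, ?_⟩
    · rw [Matrix.det_adjugate, hV'det, one_pow]
    · rw [← hRV', Matrix.mul_assoc, Matrix.mul_adjugate, hV'det, one_smul, mul_one]

namespace BQF

lemma act_mul (q : BQF) (M N : Matrix (Fin 2) (Fin 2) ℤ) :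
    q.act (M * N) = (q.act M).act N := by
  simp only [act, eval, Matrix.mul_apply, Fin.sum_univ_two, BQF.mk.injEq]
  refine ⟨by ring, by ring, by ring⟩

lemma act_one (q : BQF) : q.act 1 = q := by
  cases q
  simp [act, eval]
  ring

lemma dvd_eval {d : ℤ} {q : BQF} (ha : d ∣ q.a) (hb : d ∣ q.b) (hc : d ∣ q.c)
    (x y : ℤ) : d ∣ q.eval x y := by
  unfold eval
  exact dvd_add (dvd_add (ha.mul_right _) ((hb.mul_right _).mul_right _)) (hc.mul_right _)

lemma dvd_act {d : ℤ} {q : BQF} (ha : d ∣ q.a) (hb : d ∣ q.b) (hc : d ∣ q.c)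
    (M : Matrix (Fin 2) (Fin 2) ℤ) :
    d ∣ (q.act M).a ∧ d ∣ (q.act M).b ∧ d ∣ (q.act M).c := by
  refine ⟨dvd_eval ha hb hc _ _, ?_, dvd_eval ha hb hc _ _⟩
  exact ((dvd_eval ha hb hc _ _).sub (dvd_eval ha hb hc _ _)).sub (dvd_eval ha hb hc _ _)

end BQF

theorem stmt19 (f : ℕ) (hf : f.Prime) (hodd : Odd f) (D : ℤ)
    (Q : BQF) (hQ : Q.IsPrimitive) (hQd : Q.disc = D * f ^ 2)
    (q : BQF) (hq : q.IsPrimitive) (hqd : q.disc = D)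
    (R : Matrix (Fin 2) (Fin 2) ℤ) (hR : R.det = f) (hQR : q.act R = Q) :
    ∃ g : ℤ, 0 ≤ g ∧ g ≤ f ∧ (g = f ∨ ¬ (f : ℤ) ∣ q.eval g 1) ∧
      BQF.ProperEquiv Q (q.act (Rmat f g)) := by
  obtain ⟨g, hg0, hgle, W, hW, hRW⟩ := decomp f hf R hR
  set P := q.act (Rmat (f:ℤ) g) with hP
  have hQP : Q = P.act W := by rw [← hQR, hRW, BQF.act_mul]
  have hequiv : BQF.ProperEquiv Q P := by
    refine ⟨⟨W.adjugate, by rw [Matrix.det_adjugate, hW, one_pow]⟩, ?_⟩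
    rw [hQP, ← BQF.act_mul, Matrix.mul_adjugate, hW, one_smul, BQF.act_one]
  refine ⟨g, hg0, hgle, ?_, hequiv⟩
  by_cases hgf : g = (f:ℤ)
  · exact Or.inl hgf
  right
  intro hdvdc
  have hRm : Rmat (f:ℤ) g = !![(f:ℤ), g; 0, 1] := by rw [Rmat, if_neg hgf]
  have hPeq : P = ⟨q.eval (f:ℤ) 0, q.eval ((f:ℤ)+g) 1 - q.eval (f:ℤ) 0 - q.eval g 1,
      q.eval g 1⟩ := by
    rw [hP, hRm]
    simp [BQF.act]
  have hPa : (f:ℤ) ∣ P.a := by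
    rw [hPeq]
    exact ⟨q.a * (f:ℤ), by unfold BQF.eval; ring⟩
  have hPb : (f:ℤ) ∣ P.b := by
    rw [hPeq]
    exact ⟨2 * q.a * g + q.b, by unfold BQF.eval; ring⟩
  have hPc : (f:ℤ) ∣ P.c := by rw [hPeq]; exact hdvdc
  obtain ⟨hQa, hQb, hQc⟩ := BQF.dvd_act hPa hPb hPc W
  rw [← hQP] at hQa hQb hQc
  have hdg : (f:ℤ) ∣ ((Int.gcd (Int.gcd Q.a Q.b) Q.c : ℕ) : ℤ) :=
    Int.dvd_coe_gcd (Int.dvd_coe_gcd hQa hQb) hQc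
  rw [hQ] at hdg
  have : f ∣ 1 := by exact_mod_cast hdg
  exact hf.ne_one (Nat.dvd_one.mp this)
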